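/- Let C be the induced substructure of 𝔾 on ℕ × {a_{+1}, a_{−1}}. Then: (a) C is a model-complete core; (b) 𝔾 and C are homomorphically equivalent; and (c) C has algebraicity — namely, every automorphism of C fixing (0, a_{+1}) also fixes (0, a_{−1}), so the orbit of (0, a_{−1}) under the pointwise stabilizer of {(0, a_{+1})} in Aut(C) is finite. -/

import Mathlib

/-- The vertex set of the complete bipartite graph `K_{2,ω}`: two disjoint countably
infinite parts, `A₊ = Sum.inl ℕ` and `A₋ = Sum.inr ℕ`. -/
abbrev Kdom : Type := ℕ ⊕ ℕ

/-- The edge relation of `K_{2,ω}`: two vertices are adjacent iff they lie in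
different parts. -/
def Kedge (x y : Kdom) : Prop := x.isLeft ≠ y.isLeft

/-- Endomorphisms of `K_{2,ω}`: edge-preserving self-maps. -/
def KEnd (f : Kdom → Kdom) : Prop := ∀ x y, Kedge x y → Kedge (f x) (f y)

/-- Automorphisms of `K_{2,ω}`: edge-preserving-and-reflecting bijections. -/
def KAut (f : Kdom → Kdom) : Prop :=
  Function.Bijective f ∧ ∀ x y, Kedge x y ↔ Kedge (f x) (f y)

/-- The domain of the structure `𝔾`: countably many copies of `K_{2,ω}`. -/
abbrev Gdom : Type := ℕ × Kdom

/-- `E₁((i,x),(j,y))` iff `i ≠ j`. -/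
def E1 (a b : Gdom) : Prop := a.1 ≠ b.1

/-- `E₂((i,x),(j,y))` iff `i = j` and `x`, `y` are adjacent in `K_{2,ω}`. -/
def E2 (a b : Gdom) : Prop := a.1 = b.1 ∧ Kedge a.2 b.2

/-- Endomorphisms of `𝔾`: maps preserving `E₁` and `E₂`. -/
def GEnd (f : Gdom → Gdom) : Prop :=
  (∀ a b, E1 a b → E1 (f a) (f b)) ∧ (∀ a b, E2 a b → E2 (f a) (f b))

/-- Automorphisms of `𝔾`: bijections preserving and reflecting `E₁` and `E₂`. -/
def GAut (f : Gdom → Gdom) : Prop :=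
  Function.Bijective f ∧ (∀ a b, E1 a b ↔ E1 (f a) (f b)) ∧
    (∀ a b, E2 a b ↔ E2 (f a) (f b))

/-- `⊔^τ sᵢ : (i,x) ↦ (τ(i), sᵢ(x))`. -/
def sqcup (τ : ℕ → ℕ) (s : ℕ → Kdom → Kdom) : Gdom → Gdom :=
  fun p => (τ p.1, s p.1 p.2)

/-- The topology of pointwise convergence on functions `A → A`:
the product topology where every factor `A` is discrete. -/
def pwTop (A : Type*) : TopologicalSpace (A → A) :=
  @Pi.topologicalSpace A (fun _ => A) (fun _ => ⊥)

/-- The fixed element `a₊₁` of the part `A₊` of `K_{2,ω}`. -/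
def aP : Kdom := Sum.inl 0

/-- The fixed element `a₋₁` of the part `A₋` of `K_{2,ω}`. -/
def aM : Kdom := Sum.inr 0

/-- The domain `ℕ × {a₊₁, a₋₁}` of the candidate core substructure of `𝔾`. -/
def Cset : Set Gdom := {p | p.2 = aP ∨ p.2 = aM}

/-- The restriction of `E₁` to the induced substructure on `Cset`. -/
def E1C (a b : Cset) : Prop := E1 a.1 b.1

/-- The restriction of `E₂` to the induced substructure on `Cset`. -/
def E2C (a b : Cset) : Prop := E2 a.1 b.1

/-- Endomorphisms of the induced substructure on `Cset`. -/
def CEnd (f : Cset → Cset) : Prop :=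
  (∀ a b, E1C a b → E1C (f a) (f b)) ∧ (∀ a b, E2C a b → E2C (f a) (f b))

/-- Automorphisms of the induced substructure on `Cset`. -/
def CAut (f : Cset → Cset) : Prop :=
  Function.Bijective f ∧ (∀ a b, E1C a b ↔ E1C (f a) (f b)) ∧
    (∀ a b, E2C a b ↔ E2C (f a) (f b))

/-- The element `(0, a₊₁)` of the core. -/
def cP : Cset := ⟨(0, aP), Or.inl rfl⟩

/-- The element `(0, a₋₁)` of the core. -/
def cM : Cset := ⟨(0, aM), Or.inr rfl⟩

/-- The induced substructure `ℂ` of `𝔾` on `ℕ × {a₊₁, a₋₁}` is (a) a model-complete core,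
(b) homomorphically equivalent to `𝔾`, and (c) has algebraicity: every automorphism of `ℂ`
fixing `(0, a₊₁)` fixes `(0, a₋₁)`, so the orbit of `(0, a₋₁)` under the stabiliser of
`(0, a₊₁)` is finite. -/

def flipK : Kdom → Kdom
  | .inl n => .inr n
  | .inr n => .inl n

lemma flipK_flipK (x : Kdom) : flipK (flipK x) = x := by cases x <;> rfl

lemma kedge_flip (x y : Kdom) : Kedge (flipK x) (flipK y) ↔ Kedge x y := by
  cases x <;> cases y <;> simp [Kedge, flipK]

def act (b : Bool) (x : Kdom) : Kdom := cond b x (flipK x)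

lemma act_act (b : Bool) (x : Kdom) : act b (act b x) = x := by
  cases b <;> simp [act, flipK_flipK]

lemma act_mem (b : Bool) {x : Kdom} (h : x = aP ∨ x = aM) :
    act b x = aP ∨ act b x = aM := by
  cases b <;> rcases h with h | h <;> subst h <;> simp [act, flipK, aP, aM]

lemma kedge_act (b : Bool) (x y : Kdom) : Kedge (act b x) (act b y) ↔ Kedge x y := by
  cases b <;> simp [act, kedge_flip]

def permOfData (π : Equiv.Perm ℕ) (σ : ℕ → Bool) : Equiv.Perm Cset where
  toFun p := ⟨(π p.1.1, act (σ p.1.1) p.1.2), act_mem _ p.2⟩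
  invFun p := ⟨(π.symm p.1.1, act (σ (π.symm p.1.1)) p.1.2), act_mem _ p.2⟩
  left_inv p := by
    apply Subtype.ext
    simp [act_act]
  right_inv p := by
    apply Subtype.ext
    simp [act_act]

lemma permOfData_caut (π : Equiv.Perm ℕ) (σ : ℕ → Bool) : CAut (permOfData π σ) := by
  refine ⟨(permOfData π σ).bijective, ?_, ?_⟩
  · rintro ⟨⟨i, x⟩, hx⟩ ⟨⟨j, y⟩, hy⟩
    simp only [E1C, E1, permOfData]
    exact not_congr (Iff.symm (EmbeddingLike.apply_eq_iff_eq π)) -- π i = π j ↔ i = j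
  · rintro ⟨⟨i, x⟩, hx⟩ ⟨⟨j, y⟩, hy⟩
    simp only [E2C, E2, permOfData]
    constructor
    · rintro ⟨h1, h2⟩
      obtain rfl : i = j := h1
      exact ⟨rfl, (kedge_act _ _ _).mpr h2⟩
    · rintro ⟨h1, h2⟩
      obtain rfl : i = j := π.injective h1
      exact ⟨rfl, (kedge_act _ _ _).mp h2⟩

lemma extend_perm (n : ℕ → ℕ) (hn : Function.Injective n) (F : Finset ℕ) :
    ∃ m : Equiv.Perm ℕ, ∀ i ∈ F, m i = n i := by
  classical
  set s : Set ℕ := ↑F with hs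
  have hsfin : s.Finite := F.finite_toSet
  have himg : (n '' s).Finite := hsfin.image n
  have h1 : (sᶜ : Set ℕ).Infinite := hsfin.infinite_compl
  have h2 : ((n '' s)ᶜ : Set ℕ).Infinite := himg.infinite_compl
  haveI := h1.to_subtype
  haveI := h2.to_subtype
  obtain ⟨d1⟩ := nonempty_denumerable ↥(sᶜ)
  obtain ⟨d2⟩ := nonempty_denumerable ↥((n '' s)ᶜ)
  letI := d1; letI := d2
  let e1 : s ≃ (n '' s) := Equiv.Set.image n s hn
  let e2 : ↥(sᶜ) ≃ ↥((n '' s)ᶜ) := (Denumerable.eqv _).trans (Denumerable.eqv _).symm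
  refine ⟨(Equiv.Set.sumCompl s).symm.trans ((e1.sumCongr e2).trans
    (Equiv.Set.sumCompl (n '' s))), ?_⟩
  intro i hi
  have hi' : i ∈ s := hi
  simp [Equiv.Set.sumCompl_symm_apply_of_mem hi', e1, Equiv.Set.image, Equiv.Set.imageOfInjOn]

def piP (i : ℕ) : Cset := ⟨(i, aP), Or.inl rfl⟩
def piM (i : ℕ) : Cset := ⟨(i, aM), Or.inr rfl⟩

lemma kedge_aPaM : Kedge aP aM := by simp [Kedge, aP, aM]

lemma mem_eq_flip {x z : Kdom} (hx : x = aP ∨ x = aM) (hz : z = aP ∨ z = aM)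
    (h : Kedge x z) : z = flipK x := by
  rcases hx with rfl | rfl <;> rcases hz with rfl | rfl <;>
    simp_all [Kedge, aP, aM, flipK]

variable {f : Cset → Cset}

noncomputable def nOf (f : Cset → Cset) (i : ℕ) : ℕ := (f (piP i)).1.1
noncomputable def sOf (f : Cset → Cset) (i : ℕ) : Bool :=
  decide ((f (piP i)).1.2 = aP)

lemma fP_eq (f : Cset → Cset) (i : ℕ) :
    (f (piP i)).1 = (nOf f i, cond (sOf f i) aP aM) := by
  have hmem := (f (piP i)).2
  refine Prod.ext rfl ?_
  rcases hmem with h | h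
  · have : sOf f i = true := by simp [sOf, h]
    rw [this]; exact h
  · have : sOf f i = false := by simp [sOf, h, aP, aM]
    rw [this]; exact h

lemma fM_eq (hf : CEnd f) (i : ℕ) : (f (piM i)).1 = (nOf f i, cond (sOf f i) aM aP) := by
  have he : E2C (piP i) (piM i) := ⟨rfl, kedge_aPaM⟩
  have h2 := hf.2 _ _ he
  rw [E2C, E2, fP_eq f i] at h2
  obtain ⟨h1, h2⟩ := h2
  refine Prod.ext h1.symm ?_
  have hz := mem_eq_flip (Or.imp (fun h => h) (fun h => h)
    (by cases hsi : sOf f i <;> simp [hsi] : cond (sOf f i) aP aM = aP ∨ cond (sOf f i) aP aM = aM))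
    (f (piM i)).2 h2
  rw [hz]
  cases hsi : sOf f i <;> simp [hsi, flipK, aP, aM]

lemma nOf_inj (hf : CEnd f) : Function.Injective (nOf f) := by
  intro i j h
  by_contra hne
  exact hf.1 (piP i) (piP j) hne h

lemma cset_cases (c : Cset) : c = piP c.1.1 ∨ c = piM c.1.1 := by
  rcases c.2 with h | h
  · left; apply Subtype.ext; exact Prod.ext rfl h
  · right; apply Subtype.ext; exact Prod.ext rfl h

lemma agree_on (hf : CEnd f) (m : Equiv.Perm ℕ) (i : ℕ) (hm : m i = nOf f i) (c : Cset)
    (hc : c.1.1 = i) : permOfData m (sOf f) c = f c := by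
  rcases cset_cases c with h | h <;> rw [h, hc] <;> apply Subtype.ext
  · rw [fP_eq f i]
    show (m i, act (sOf f i) aP) = _
    rw [hm]
    refine Prod.ext rfl ?_
    cases hsi : sOf f i <;> simp [act, hsi, flipK, aP, aM]
  · rw [fM_eq hf i]
    show (m i, act (sOf f i) aM) = _
    rw [hm]
    refine Prod.ext rfl ?_
    cases hsi : sOf f i <;> simp [act, hsi, flipK, aP, aM]


lemma closure_sub_cend {f : Cset → Cset}
    (hf : f ∈ @closure (Cset → Cset) (pwTop Cset) {f | CAut f}) : CEnd f := by
  have key : ∀ a b : Cset, ∃ g, CAut g ∧ g a = f a ∧ g b = f b := by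
    intro a b
    have h1 : @IsOpen (Cset → Cset) (pwTop Cset) ((fun g : Cset → Cset => g a) ⁻¹' {f a}) :=
      @Continuous.isOpen_preimage _ _ (pwTop Cset) ⊥ _
        (@continuous_apply Cset (fun _ => Cset) (fun _ => ⊥) a) {f a}
        (@isOpen_discrete _ ⊥ (@DiscreteTopology.mk _ ⊥ rfl) _)
    have h2 : @IsOpen (Cset → Cset) (pwTop Cset) ((fun g : Cset → Cset => g b) ⁻¹' {f b}) :=
      @Continuous.isOpen_preimage _ _ (pwTop Cset) ⊥ _
        (@continuous_apply Cset (fun _ => Cset) (fun _ => ⊥) b) {f b}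
        (@isOpen_discrete _ ⊥ (@DiscreteTopology.mk _ ⊥ rfl) _)
    obtain ⟨g, hg1, hg2⟩ := (@mem_closure_iff _ (pwTop Cset) _ _).1 hf _ (@IsOpen.inter _ (pwTop Cset) _ _ h1 h2) ⟨rfl, rfl⟩
    exact ⟨g, hg2, hg1.1, hg1.2⟩
  constructor
  · intro a b hab
    obtain ⟨g, hg, ha, hb⟩ := key a b
    rw [← ha, ← hb]
    exact (hg.2.1 a b).mp hab
  · intro a b hab
    obtain ⟨g, hg, ha, hb⟩ := key a b
    rw [← ha, ← hb]
    exact (hg.2.2 a b).mp hab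

lemma cend_sub_closure {f : Cset → Cset} (hf : CEnd f) :
    f ∈ @closure (Cset → Cset) (pwTop Cset) {f | CAut f} := by
  rw [@mem_closure_iff _ (pwTop Cset) _ _]
  intro o ho hfo
  obtain ⟨I, u, hu, hsub⟩ := (@isOpen_pi_iff Cset (fun _ => Cset) (fun _ => ⊥) o).1 ho f hfo
  obtain ⟨m, hm⟩ := extend_perm (nOf f) (nOf_inj hf) (I.image (fun c => c.1.1))
  refine ⟨permOfData m (sOf f), hsub ?_, permOfData_caut m (sOf f)⟩
  intro c hc
  have hag := agree_on hf m c.1.1 (hm _ (Finset.mem_image_of_mem _ hc)) c rfl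
  rw [hag]
  exact (hu c hc).2

lemma condIsLeft (b : Bool) : (cond b aP aM).isLeft = b := by cases b <;> rfl

theorem stmt15 :
    ({f : Cset → Cset | CEnd f} = @closure (Cset → Cset) (pwTop Cset) {f | CAut f}) ∧
    ((∃ g : Gdom → Cset,
        (∀ a b, E1 a b → E1C (g a) (g b)) ∧ (∀ a b, E2 a b → E2C (g a) (g b))) ∧
      (∃ h : Cset → Gdom,
        (∀ a b, E1C a b → E1 (h a) (h b)) ∧ (∀ a b, E2C a b → E2 (h a) (h b)))) ∧
    ((∀ f : Cset → Cset, CAut f → f cP = cP → f cM = cM) ∧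
      Set.Finite {b : Cset | ∃ f, CAut f ∧ f cP = cP ∧ f cM = b}) := by

  have hc1 : ∀ f : Cset → Cset, CAut f → f cP = cP → f cM = cM := by
    intro f hf hP
    have he : E2C cP cM := ⟨rfl, kedge_aPaM⟩
    have h2 := (hf.2.2 cP cM).mp he
    rw [hP] at h2
    obtain ⟨h1, hk⟩ := h2
    have hz := mem_eq_flip (Or.inl rfl) (f cM).2 hk
    exact Subtype.ext (Prod.ext h1.symm hz)
  refine ⟨?_, ⟨?_, ?_⟩, hc1, ?_⟩
  · ext f
    exact ⟨fun hf => cend_sub_closure hf, fun hf => closure_sub_cend hf⟩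
  · refine ⟨fun p => ⟨(p.1, cond p.2.isLeft aP aM), by cases h : p.2.isLeft <;> simp [h, Cset]⟩,
      fun a b hab => hab, fun a b hab => ⟨hab.1, ?_⟩⟩
    have h2 := hab.2
    simp only [E2C, E2] at *
    simpa [Kedge, condIsLeft] using h2
  · exact ⟨Subtype.val, fun a b h => h, fun a b h => h⟩
  · apply Set.Finite.subset (Set.finite_singleton cM)
    rintro b ⟨f, hf, hP, rfl⟩
    rw [hc1 f hf hP]
    rfl
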